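/- If the Krylov subspace K^j(p_0, P) is invariant under P, then the Arnoldi aggregation of size j is exact: it is dynamic-exact (Π A = A P) and satisfies p̃_0 = p_0, and consequently p̃_k = p_k for all k ≥ 0. -/
import Mathlib


open Matrix Finset

/-- Euclidean norm of a row vector. -/
noncomputable def norm2 {n : ℕ} (v : Fin n → ℝ) : ℝ := Real.sqrt (v ⬝ᵥ v)

/-- One Gram–Schmidt projection-subtraction step. -/
noncomputable def gsStep {n : ℕ} (r q : Fin n → ℝ) : Fin n → ℝ := r - (r ⬝ᵥ q) • q

/-- List `[q_0, …, q_j]` of Arnoldi vectors after `j` expansion steps applied to `(v, M)`. -/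
noncomputable def arnoldiList {n : ℕ} (v : Fin n → ℝ) (M : Matrix (Fin n) (Fin n) ℝ) :
    ℕ → List (Fin n → ℝ)
  | 0 => [(norm2 v)⁻¹ • v]
  | j + 1 =>
    let qs := arnoldiList v M j
    let r := qs.foldl gsStep (Matrix.vecMul (qs.getLastD 0) M)
    qs ++ [(norm2 r)⁻¹ • r]

/-- The Arnoldi vector `q_{i+1}` of the paper (0-indexed: `aQ v M i`). -/
noncomputable def aQ {n : ℕ} (v : Fin n → ℝ) (M : Matrix (Fin n) (Fin n) ℝ) (i : ℕ) :
    Fin n → ℝ :=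
  (arnoldiList v M i).getLastD 0

/-- Partial residual `r^{(i)}` in outer step `j` (0-indexed): `q_j M` minus the projections
onto `q_0, …, q_{i-1}`. -/
noncomputable def pres {n : ℕ} (v : Fin n → ℝ) (M : Matrix (Fin n) (Fin n) ℝ) (j i : ℕ) :
    Fin n → ℝ :=
  ((arnoldiList v M j).take i).foldl gsStep (Matrix.vecMul (aQ v M j) M)

/-- The Gram–Schmidt coefficient `h_{j,i}` (0-indexed in both arguments). -/
noncomputable def aH {n : ℕ} (v : Fin n → ℝ) (M : Matrix (Fin n) (Fin n) ℝ) (j i : ℕ) : ℝ :=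
  pres v M j i ⬝ᵥ aQ v M i

/-- The subdiagonal coefficient `h_{j, j+1} = ‖r_{j+1}‖₂` (0-indexed in `j`). -/
noncomputable def hsub {n : ℕ} (v : Fin n → ℝ) (M : Matrix (Fin n) (Fin n) ℝ) (j : ℕ) : ℝ :=
  norm2 (pres v M j (j + 1))

/-- The upper-Hessenberg matrix `H_j` produced by `j` Arnoldi steps. -/
noncomputable def arnoldiHmat {n : ℕ} (v : Fin n → ℝ) (M : Matrix (Fin n) (Fin n) ℝ) (j : ℕ) :
    Matrix (Fin j) (Fin j) ℝ := fun i l =>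
  if (l : ℕ) ≤ (i : ℕ) then aH v M i l
  else if (l : ℕ) = (i : ℕ) + 1 then hsub v M i else 0

/-- The matrix `Q_j` whose rows are the Arnoldi vectors `q_1, …, q_j` of the paper. -/
noncomputable def arnoldiQmat {n : ℕ} (v : Fin n → ℝ) (M : Matrix (Fin n) (Fin n) ℝ) (j : ℕ) :
    Matrix (Fin j) (Fin n) ℝ := fun i => aQ v M i

/-- The Krylov subspace `K^j(v, M) = span{v, vM, …, vM^{j-1}}` (of row vectors). -/
noncomputable def krylov {n : ℕ} (v : Fin n → ℝ) (M : Matrix (Fin n) (Fin n) ℝ) (j : ℕ) :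
    Submodule ℝ (Fin n → ℝ) :=
  Submodule.span ℝ (Set.range fun i : Fin j => Matrix.vecMul v (M ^ (i : ℕ)))

section AuxArnoldi

variable {n : ℕ} (v : Fin n → ℝ) (M : Matrix (Fin n) (Fin n) ℝ)

lemma arnoldiList_length (j : ℕ) : (arnoldiList v M j).length = j + 1 := by
  induction j with
  | zero => rfl
  | succ j ih => simp [arnoldiList, ih]

lemma arnoldiList_succ (j : ℕ) :
    arnoldiList v M (j + 1) = arnoldiList v M j ++ [aQ v M (j + 1)] := by
  conv_lhs => rw [arnoldiList]
  rw [aQ, arnoldiList]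
  simp [pres]

lemma aQ_succ (j : ℕ) :
    aQ v M (j + 1) = (norm2 (pres v M j (j + 1)))⁻¹ • pres v M j (j + 1) := by
  rw [aQ, arnoldiList]
  simp only [List.getLastD_concat]
  congr 1 <;>
  · rw [pres, List.take_of_length_le (le_of_eq (arnoldiList_length v M j))]; rfl

lemma arnoldiList_eq (j : ℕ) :
    arnoldiList v M j = (List.range (j + 1)).map (aQ v M) := by
  induction j with
  | zero => rfl
  | succ j ih =>
    rw [arnoldiList_succ, ih, List.range_succ (n := j + 1)]
    simp

lemma pres_eq_foldl (j i : ℕ) (hij : i ≤ j + 1) :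
    pres v M j i = ((List.range i).map (aQ v M)).foldl gsStep (Matrix.vecMul (aQ v M j) M) := by
  rw [pres, arnoldiList_eq, ← List.map_take, List.take_range, min_eq_left hij]

lemma pres_zero (j : ℕ) : pres v M j 0 = Matrix.vecMul (aQ v M j) M := by
  rw [pres_eq_foldl v M j 0 (Nat.zero_le _)]; rfl

lemma pres_succ (j i : ℕ) (h : i ≤ j) :
    pres v M j (i + 1) = pres v M j i - aH v M j i • aQ v M i := by
  rw [pres_eq_foldl v M j (i + 1) (by omega), List.range_succ, List.map_append,
    List.foldl_append, ← pres_eq_foldl v M j i (by omega)]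
  simp [gsStep, aH]

lemma pres_eq_sub_sum (j k : ℕ) (h : k ≤ j + 1) :
    pres v M j k =
      Matrix.vecMul (aQ v M j) M - ∑ l ∈ Finset.range k, aH v M j l • aQ v M l := by
  induction k with
  | zero => simp [pres_zero]
  | succ k ih =>
    rw [pres_succ v M j k (by omega), ih (by omega), Finset.sum_range_succ]
    abel

end AuxArnoldi

section AuxOrtho

variable {n : ℕ} (v : Fin n → ℝ) (M : Matrix (Fin n) (Fin n) ℝ)

lemma dot_self_nonneg (r : Fin n → ℝ) : 0 ≤ r ⬝ᵥ r :=
  Finset.sum_nonneg fun _ _ => mul_self_nonneg _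

lemma norm2_mul_self (r : Fin n → ℝ) : norm2 r * norm2 r = r ⬝ᵥ r :=
  Real.mul_self_sqrt (dot_self_nonneg r)

lemma unit_of_norm2_ne (r : Fin n → ℝ) (h : norm2 r ≠ 0) :
    ((norm2 r)⁻¹ • r) ⬝ᵥ ((norm2 r)⁻¹ • r) = 1 := by
  rw [smul_dotProduct, dotProduct_smul, smul_eq_mul, smul_eq_mul, ← norm2_mul_self]
  field_simp

lemma sum_dotProduct' {ι : Type*} (s : Finset ι) (f : ι → Fin n → ℝ) (u : Fin n → ℝ) :
    (∑ i ∈ s, f i) ⬝ᵥ u = ∑ i ∈ s, f i ⬝ᵥ u := by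
  simp only [dotProduct, Finset.sum_apply, Finset.sum_mul]
  exact Finset.sum_comm

lemma aQ_zero : aQ v M 0 = (norm2 v)⁻¹ • v := rfl

lemma pres_dot_eq_zero (m : ℕ)
    (ON : ∀ i ≤ m, ∀ l ≤ m, aQ v M i ⬝ᵥ aQ v M l = if i = l then 1 else 0) :
    ∀ k ≤ m + 1, ∀ l < k, pres v M m k ⬝ᵥ aQ v M l = 0 := by
  intro k
  induction k with
  | zero => intro _ l hl; omega
  | succ k ih =>
    intro hk l hl
    rw [pres_succ v M m k (by omega), sub_dotProduct, smul_dotProduct, smul_eq_mul]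
    rcases eq_or_lt_of_le (Nat.lt_succ_iff.mp hl) with h | h
    · subst h
      rw [ON l (by omega) l (by omega), if_pos rfl, aH]
      ring
    · rw [ih (by omega) l h, ON k (by omega) l (by omega), if_neg (by omega)]
      ring

lemma aQ_ortho (h0 : norm2 v ≠ 0) :
    ∀ m, (∀ i, i < m → hsub v M i ≠ 0) →
      ∀ i, i ≤ m → ∀ l, l ≤ m → aQ v M i ⬝ᵥ aQ v M l = if i = l then 1 else 0 := by
  intro m
  induction m with
  | zero =>
    intro _ i hi l hl
    interval_cases i
    interval_cases l
    rw [if_pos rfl, aQ_zero]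
    exact unit_of_norm2_ne v h0
  | succ m ih =>
    intro hr i hi l hl
    have hr' : ∀ i, i < m → hsub v M i ≠ 0 := fun i hi => hr i (by omega)
    have ON := ih hr'
    have hkey : ∀ l, l ≤ m → aQ v M (m + 1) ⬝ᵥ aQ v M l = 0 := by
      intro t ht
      rw [aQ_succ, smul_dotProduct, smul_eq_mul,
        pres_dot_eq_zero v M m ON (m + 1) le_rfl t (by omega), mul_zero]
    rcases Nat.lt_succ_iff_lt_or_eq.mp (Nat.lt_succ_of_le hi) with hi' | hi' <;>
      rcases Nat.lt_succ_iff_lt_or_eq.mp (Nat.lt_succ_of_le hl) with hl' | hl'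
    · exact ON i (by omega) l (by omega)
    · subst hl'
      rw [dotProduct_comm, hkey i (by omega), if_neg (by omega)]
    · subst hi'
      rw [hkey l (by omega), if_neg (by omega)]
    · subst hi'; subst hl'
      rw [if_pos rfl, aQ_succ]
      exact unit_of_norm2_ne _ (hr m (by omega))

end AuxOrtho

section AuxSpan

variable {n : ℕ} (v : Fin n → ℝ) (M : Matrix (Fin n) (Fin n) ℝ)

lemma aQ_mul (j : ℕ) (h : hsub v M j ≠ 0) :
    Matrix.vecMul (aQ v M j) M =
      (∑ l ∈ Finset.range (j + 1), aH v M j l • aQ v M l) + hsub v M j • aQ v M (j + 1) := by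
  have hp := pres_eq_sub_sum v M j (j + 1) le_rfl
  rw [aQ_succ, smul_smul,
    show hsub v M j * (norm2 (pres v M j (j + 1)))⁻¹ = 1 from mul_inv_cancel₀ h,
    one_smul, hp]
  abel

lemma smul_aQ_zero (h0 : norm2 v ≠ 0) : norm2 v • aQ v M 0 = v := by
  rw [aQ_zero, smul_smul, mul_inv_cancel₀ h0, one_smul]

lemma mem_span_aQ (j : ℕ) (h0 : norm2 v ≠ 0) (hr : ∀ i, i + 1 < j → hsub v M i ≠ 0) :
    ∀ i, i < j → Matrix.vecMul v (M ^ i) ∈ Submodule.span ℝ (aQ v M '' {t : ℕ | t < j}) := by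
  have key : ∀ i, i < j →
      Matrix.vecMul v (M ^ i) ∈ Submodule.span ℝ (aQ v M '' {t : ℕ | t ≤ i}) := by
    intro i
    induction i with
    | zero =>
      intro _
      have hv : Matrix.vecMul v (M ^ 0) = norm2 v • aQ v M 0 := by
        rw [pow_zero, Matrix.vecMul_one, smul_aQ_zero v M h0]
      rw [hv]
      exact Submodule.smul_mem _ _ (Submodule.subset_span ⟨0, by simp, rfl⟩)
    | succ i ih =>
      intro hij
      rw [pow_succ, ← Matrix.vecMul_vecMul]
      have step : ∀ x ∈ Submodule.span ℝ (aQ v M '' {t : ℕ | t ≤ i}),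
          Matrix.vecMul x M ∈ Submodule.span ℝ (aQ v M '' {t : ℕ | t ≤ i + 1}) := by
        intro x hx
        induction hx using Submodule.span_induction with
        | mem y hy =>
          obtain ⟨t, ht, rfl⟩ := hy
          simp only [Set.mem_setOf_eq] at ht
          rw [aQ_mul v M t (hr t (by omega))]
          refine Submodule.add_mem _ (Submodule.sum_mem _ fun l hl => ?_)
            (Submodule.smul_mem _ _ (Submodule.subset_span
              ⟨t + 1, by simp only [Set.mem_setOf_eq]; omega, rfl⟩))
          simp only [Finset.mem_range] at hl
          exact Submodule.smul_mem _ _ (Submodule.subset_span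
            ⟨l, by simp only [Set.mem_setOf_eq]; omega, rfl⟩)
        | zero => rw [Matrix.zero_vecMul]; exact Submodule.zero_mem _
        | add y z _ _ hy hz => rw [Matrix.add_vecMul]; exact Submodule.add_mem _ hy hz
        | smul a y _ hy => rw [Matrix.smul_vecMul]; exact Submodule.smul_mem _ _ hy
      exact step _ (ih (by omega))
  intro i hij
  refine Submodule.span_mono ?_ (key i hij)
  rintro x ⟨t, ht, rfl⟩
  simp only [Set.mem_setOf_eq] at ht
  exact ⟨t, by simp only [Set.mem_setOf_eq]; omega, rfl⟩

lemma aQ_mem_krylov (j : ℕ) (hj : 0 < j)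
    (hinv : ∀ w ∈ krylov v M j, Matrix.vecMul w M ∈ krylov v M j) :
    ∀ t, t < j → aQ v M t ∈ krylov v M j := by
  intro t
  induction t using Nat.strong_induction_on with
  | _ t ih =>
    match t with
    | 0 =>
      intro _
      rw [aQ_zero]
      refine Submodule.smul_mem _ _ (Submodule.subset_span ⟨⟨0, hj⟩, ?_⟩)
      simp [Matrix.vecMul_one]
    | t + 1 =>
      intro htj
      rw [aQ_succ]
      refine Submodule.smul_mem _ _ ?_
      rw [pres_eq_sub_sum v M t (t + 1) le_rfl]
      refine Submodule.sub_mem _ (hinv _ (ih t (by omega) (by omega)))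
        (Submodule.sum_mem _ fun l hl => ?_)
      simp only [Finset.mem_range] at hl
      exact Submodule.smul_mem _ _ (ih l (by omega) (by omega))

end AuxSpan

/-- if `K^j(p₀,P)` is invariant under `P`, the Arnoldi aggregation of size `j`
is exact: it is dynamic-exact, `p̃_0 = p_0`, and consequently `p̃_k = p_k` for all `k`. -/
theorem arnoldi_exact_of_invariant {n j : ℕ} (hj : 0 < j)
    (P : Matrix (Fin n) (Fin n) ℝ)
    (hPnn : ∀ i l, 0 ≤ P i l) (hProw : ∀ i, ∑ l, P i l = 1)
    (p₀ : Fin n → ℝ) (hp₀nn : ∀ s, 0 ≤ p₀ s) (hp₀sum : ∑ s, p₀ s = 1)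
    (hrun : ∀ i, i + 1 < j → hsub p₀ P i ≠ 0)
    (hinv : ∀ w ∈ krylov p₀ P j, Matrix.vecMul w P ∈ krylov p₀ P j) :
    arnoldiHmat p₀ P j * arnoldiQmat p₀ P j = arnoldiQmat p₀ P j * P ∧
    Matrix.vecMul (fun s : Fin j => if (s : ℕ) = 0 then norm2 p₀ else 0)
      (arnoldiQmat p₀ P j) = p₀ ∧
    ∀ k : ℕ,
      Matrix.vecMul
        (Matrix.vecMul (fun s : Fin j => if (s : ℕ) = 0 then norm2 p₀ else 0)
          ((arnoldiHmat p₀ P j) ^ k))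
        (arnoldiQmat p₀ P j) =
      Matrix.vecMul p₀ (P ^ k) := by
  obtain ⟨m, rfl⟩ : ∃ m, j = m + 1 := ⟨j - 1, by omega⟩
  have hp0 : p₀ ≠ 0 := by
    intro h; rw [h] at hp₀sum; simp at hp₀sum
  have hdd : p₀ ⬝ᵥ p₀ ≠ 0 := fun h => hp0 (dotProduct_self_eq_zero.mp h)
  have h0 : norm2 p₀ ≠ 0 := by
    intro h; exact hdd (by rw [← norm2_mul_self, h, mul_zero])
  have hr : ∀ i, i < m → hsub p₀ P i ≠ 0 := fun i hi => hrun i (by omega)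
  have ON := aQ_ortho p₀ P h0 m hr
  have hresorth := pres_dot_eq_zero p₀ P m ON (m + 1) le_rfl
  have hQmem : ∀ t, t < m + 1 → aQ p₀ P t ∈ krylov p₀ P (m + 1) :=
    aQ_mem_krylov p₀ P (m + 1) (by omega) hinv
  have hrmem : pres p₀ P m (m + 1) ∈ krylov p₀ P (m + 1) := by
    rw [pres_eq_sub_sum p₀ P m (m + 1) le_rfl]
    refine Submodule.sub_mem _ (hinv _ (hQmem m (by omega)))
      (Submodule.sum_mem _ fun l hl => ?_)
    simp only [Finset.mem_range] at hl
    exact Submodule.smul_mem _ _ (hQmem l (by omega))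
  have hKsub : krylov p₀ P (m + 1) ≤
      Submodule.span ℝ (Set.range fun t : Fin (m + 1) => aQ p₀ P t) := by
    rw [krylov, Submodule.span_le]
    rintro x ⟨i, rfl⟩
    refine Submodule.span_mono ?_ (mem_span_aQ p₀ P (m + 1) h0 hrun i i.isLt)
    rintro y ⟨t, ht, rfl⟩
    simp only [Set.mem_setOf_eq] at ht
    exact ⟨⟨t, ht⟩, rfl⟩
  have hres0 : pres p₀ P m (m + 1) = 0 := by
    obtain ⟨c, hc⟩ := (Submodule.mem_span_range_iff_exists_fun ℝ).mp (hKsub hrmem)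
    refine dotProduct_self_eq_zero.mp ?_
    nth_rewrite 1 [← hc]
    rw [sum_dotProduct']
    refine Finset.sum_eq_zero fun t _ => ?_
    rw [smul_dotProduct, smul_eq_mul, dotProduct_comm,
      hresorth t (by omega), mul_zero]
  have hrow : ∀ i : Fin (m + 1),
      (∑ l ∈ Finset.range (m + 1),
        (if l ≤ (i : ℕ) then aH p₀ P i l else if l = (i : ℕ) + 1 then hsub p₀ P i else 0)
          • aQ p₀ P l) = Matrix.vecMul (aQ p₀ P i) P := by
    intro i
    rcases eq_or_lt_of_le (Nat.lt_succ_iff.mp i.isLt) with hi | hi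
    · have hcg : ∀ l ∈ Finset.range (m + 1),
          (if l ≤ (i : ℕ) then aH p₀ P i l else if l = (i : ℕ) + 1 then hsub p₀ P i else 0)
            • aQ p₀ P l = aH p₀ P i l • aQ p₀ P l := by
        intro l hl
        simp only [Finset.mem_range] at hl
        rw [if_pos (by omega)]
      rw [Finset.sum_congr rfl hcg, hi]
      have hp := pres_eq_sub_sum p₀ P m (m + 1) le_rfl
      rw [hres0] at hp
      exact (sub_eq_zero.mp hp.symm).symm
    · have hsubset : Finset.range ((i : ℕ) + 2) ⊆ Finset.range (m + 1) :=
        Finset.range_subset_range.mpr (by omega)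
      have hzero : ∀ l ∈ Finset.range (m + 1), l ∉ Finset.range ((i : ℕ) + 2) →
          (if l ≤ (i : ℕ) then aH p₀ P i l else if l = (i : ℕ) + 1 then hsub p₀ P i else 0)
            • aQ p₀ P l = 0 := by
        intro l _ hl
        simp only [Finset.mem_range] at hl
        rw [if_neg (by omega), if_neg (by omega), zero_smul]
      rw [← Finset.sum_subset hsubset hzero, Finset.sum_range_succ,
        if_neg (by omega), if_pos rfl]
      have hcg : ∀ l ∈ Finset.range ((i : ℕ) + 1),
          (if l ≤ (i : ℕ) then aH p₀ P i l else if l = (i : ℕ) + 1 then hsub p₀ P i else 0)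
            • aQ p₀ P l = aH p₀ P i l • aQ p₀ P l := by
        intro l hl
        simp only [Finset.mem_range] at hl
        rw [if_pos (by omega)]
      rw [Finset.sum_congr rfl hcg, (aQ_mul p₀ P i (hr i hi)).symm]
  have h1 : arnoldiHmat p₀ P (m + 1) * arnoldiQmat p₀ P (m + 1) =
      arnoldiQmat p₀ P (m + 1) * P := by
    ext i s
    rw [Matrix.mul_apply, Matrix.mul_apply]
    have hs := congrFun (hrow i) s
    simp only [Finset.sum_apply, Pi.smul_apply, smul_eq_mul] at hs
    calc ∑ l : Fin (m + 1), arnoldiHmat p₀ P (m + 1) i l * arnoldiQmat p₀ P (m + 1) l s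
        = ∑ l ∈ Finset.range (m + 1),
            (if l ≤ (i : ℕ) then aH p₀ P i l else if l = (i : ℕ) + 1 then hsub p₀ P i else 0)
              * aQ p₀ P l s :=
          Fin.sum_univ_eq_sum_range
            (fun l => (if l ≤ (i : ℕ) then aH p₀ P i l
              else if l = (i : ℕ) + 1 then hsub p₀ P i else 0) * aQ p₀ P l s) (m + 1)
      _ = Matrix.vecMul (aQ p₀ P i) P s := hs
      _ = ∑ t, arnoldiQmat p₀ P (m + 1) i t * P t s := by
          simp [Matrix.vecMul, dotProduct, arnoldiQmat]
  have h2 : Matrix.vecMul (fun s : Fin (m + 1) => if (s : ℕ) = 0 then norm2 p₀ else 0)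
      (arnoldiQmat p₀ P (m + 1)) = p₀ := by
    funext s
    show ∑ t : Fin (m + 1), (if (t : ℕ) = 0 then norm2 p₀ else 0) * aQ p₀ P t s = p₀ s
    rw [Fin.sum_univ_eq_sum_range
      (fun k => (if k = 0 then norm2 p₀ else 0) * aQ p₀ P k s) (m + 1)]
    rw [Finset.sum_eq_single 0 (fun b _ hb => by rw [if_neg hb, zero_mul])
      (fun h => absurd (Finset.mem_range.mpr (by omega)) h)]
    rw [if_pos rfl, aQ_zero]
    show norm2 p₀ * ((norm2 p₀)⁻¹ * p₀ s) = p₀ s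
    field_simp
  refine ⟨h1, h2, ?_⟩
  intro k
  induction k with
  | zero => simpa [Matrix.vecMul_one] using h2
  | succ k ih =>
    rw [pow_succ, pow_succ]
    simp only [← Matrix.vecMul_vecMul]
    rw [Matrix.vecMul_vecMul _ (arnoldiHmat p₀ P (m + 1)) (arnoldiQmat p₀ P (m + 1)), h1,
      ← Matrix.vecMul_vecMul _ (arnoldiQmat p₀ P (m + 1)) P, ih]
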